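/- Let (M,d) be a metric space, p > 1, and φ a c_p-concave function that is locally Lipschitz near x ∈ M. Then the ascending slope satisfies |D⁺φ|(x) ≤ inf_{y ∈ ∂^{c_p}φ(x)} d(x,y)^{p−1}, where ∂^{c_p}φ(x) is the c_p-subdifferential. -/

import Mathlib

open Filter Topology

/-- The ascending slope `|D⁺f|(x) = limsup_{y→x} [f(y)-f(x)]₊ / d(y,x)`. -/
noncomputable def ascSlope {M : Type*} [MetricSpace M] (f : M → ℝ) (x : M) : ℝ :=
  Filter.limsup (fun y => max (f y - f x) 0 / dist y x) (𝓝[≠] x)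

theorem stmt17 {M : Type*} [MetricSpace M] (p : ℝ) (hp : 1 < p)
    (φ : M → EReal)
    (hconc : ∃ ψ : M → EReal,
      ∀ z : M, φ z = ⨅ y : M, (((dist z y) ^ p / p : ℝ) : EReal) - ψ y)
    (x : M)
    (hloc : ∃ ε > (0:ℝ), ∃ C : ℝ,
      (∀ a ∈ Metric.ball x ε, ∃ v : ℝ, φ a = (v : EReal)) ∧
      (∀ a ∈ Metric.ball x ε, ∀ b ∈ Metric.ball x ε,
        |(φ a).toReal - (φ b).toReal| ≤ C * dist a b)) :
    ∀ y : M,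
      φ x + (⨅ z : M, (((dist z y) ^ p / p : ℝ) : EReal) - φ z) =
        (((dist x y) ^ p / p : ℝ) : EReal) →
      ascSlope (fun z => (φ z).toReal) x ≤ dist x y ^ (p - 1) := by
  obtain ⟨ε₀, hε₀, C, hfin, hlip⟩ := hloc
  intro y heq
  set b := dist x y with hb
  have hb0 : (0:ℝ) ≤ b := dist_nonneg
  have hp0 : (0:ℝ) < p := by linarith
  obtain ⟨vx, hvx⟩ := hfin x (Metric.mem_ball_self hε₀)
  -- key real bound on the ball
  have key : ∀ z ∈ Metric.ball x ε₀,
      (φ z).toReal - (φ x).toReal ≤ ((dist z x + b) ^ p - b ^ p) / p := by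
    intro z hz
    obtain ⟨vz, hvz⟩ := hfin z hz
    have hIz : (⨅ w : M, (((dist w y) ^ p / p : ℝ) : EReal) - φ w)
        ≤ (((dist z y) ^ p / p : ℝ) : EReal) - φ z := iInf_le _ z
    have h2 : (((dist x y) ^ p / p : ℝ) : EReal)
        ≤ φ x + ((((dist z y) ^ p / p : ℝ) : EReal) - φ z) := by
      rw [← heq]; exact add_le_add_right hIz _
    rw [hvx, hvz, ← EReal.coe_sub, ← EReal.coe_add, EReal.coe_le_coe_iff] at h2
    rw [hvx, hvz]; simp only [EReal.toReal_coe]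
    have htri : dist z y ≤ dist z x + b := dist_triangle z x y
    have hzy : (dist z y) ^ p ≤ (dist z x + b) ^ p :=
      Real.rpow_le_rpow dist_nonneg htri hp0.le
    have hdiv : (dist z y ^ p - b ^ p) / p ≤ ((dist z x + b) ^ p - b ^ p) / p := by
      gcongr
    have h3 : vz - vx ≤ (dist z y ^ p - b ^ p) / p := by
      rw [sub_div] at *
      linarith [h2]
    linarith
  -- derivative of s ↦ s^p/p at b
  have hderiv : HasDerivAt (fun s : ℝ => s ^ p / p) (b ^ (p-1)) b := by
    have h := (Real.hasDerivAt_rpow_const (x := b) (p := p) (Or.inr hp.le)).div_const p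
    simpa [mul_div_assoc, mul_div_cancel_left₀ _ hp0.ne'] using h
  have hslope : Tendsto (slope (fun s : ℝ => s ^ p / p) b) (𝓝[≠] b) (𝓝 (b ^ (p-1))) :=
    hasDerivAt_iff_tendsto_slope.mp hderiv
  have hmap : Tendsto (fun t : ℝ => b + t) (𝓝[>] (0:ℝ)) (𝓝[≠] b) := by
    rw [tendsto_nhdsWithin_iff]
    constructor
    · have h : Tendsto (fun t : ℝ => b + t) (𝓝 (0:ℝ)) (𝓝 (b + 0)) :=
        (continuous_const.add continuous_id).tendsto 0
      simpa using h.mono_left nhdsWithin_le_nhds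
    · filter_upwards [self_mem_nhdsWithin] with t ht
      simp only [Set.mem_Ioi] at ht
      simp only [Set.mem_compl_iff, Set.mem_singleton_iff]
      exact ne_of_gt (lt_add_of_pos_right b ht)
  have hgt : Tendsto (fun t : ℝ => ((t + b) ^ p - b ^ p) / p / t)
      (𝓝[>] (0:ℝ)) (𝓝 (b ^ (p-1))) := by
    have h := hslope.comp hmap
    apply h.congr'
    filter_upwards [self_mem_nhdsWithin] with t ht
    simp only [Set.mem_Ioi] at ht
    show slope (fun s : ℝ => s ^ p / p) b (b + t) = ((t + b) ^ p - b ^ p) / p / t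
    rw [slope_def_field]
    rw [add_comm b t, add_sub_cancel_right, sub_div]
    ring
  have hd : Tendsto (fun z : M => dist z x) (𝓝[≠] x) (𝓝[>] (0:ℝ)) := by
    rw [tendsto_nhdsWithin_iff]
    constructor
    · have h : Tendsto (fun z : M => dist z x) (𝓝 x) (𝓝 (dist x x)) :=
        (continuous_id.dist continuous_const).tendsto x
      simpa using h.mono_left nhdsWithin_le_nhds
    · filter_upwards [self_mem_nhdsWithin] with z hz
      simp only [Set.mem_compl_iff, Set.mem_singleton_iff] at hz
      simpa [Set.mem_Ioi] using dist_pos.mpr hz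
  have hv : Tendsto (fun z : M => ((dist z x + b) ^ p - b ^ p) / p / dist z x)
      (𝓝[≠] x) (𝓝 (b ^ (p-1))) := hgt.comp hd
  have hev : ∀ᶠ z in 𝓝[≠] x,
      max ((φ z).toReal - (φ x).toReal) 0 / dist z x
        ≤ ((dist z x + b) ^ p - b ^ p) / p / dist z x := by
    filter_upwards [self_mem_nhdsWithin,
      nhdsWithin_le_nhds (Metric.ball_mem_nhds x hε₀)] with z hz hzball
    simp only [Set.mem_compl_iff, Set.mem_singleton_iff] at hz
    have hdz : 0 < dist z x := dist_pos.mpr hz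
    have hG : 0 ≤ ((dist z x + b) ^ p - b ^ p) / p := by
      have h : b ^ p ≤ (dist z x + b) ^ p :=
        Real.rpow_le_rpow hb0 (by linarith) hp0.le
      exact div_nonneg (by linarith) hp0.le
    exact div_le_div_of_nonneg_right (max_le (key z hzball) hG) hdz.le
  have hnonneg : ∀ z : M, 0 ≤ max ((φ z).toReal - (φ x).toReal) 0 / dist z x := by
    intro z
    exact div_nonneg (le_max_right _ _) dist_nonneg
  unfold ascSlope
  by_cases hne : (𝓝[≠] x).NeBot
  · haveI := hne
    have hcb : IsCoboundedUnder (· ≤ ·) (𝓝[≠] x)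
        (fun z => max ((φ z).toReal - (φ x).toReal) 0 / dist z x) :=
      isCoboundedUnder_le_of_eventually_le _ (Filter.Eventually.of_forall hnonneg)
    have hbd : IsBoundedUnder (· ≤ ·) (𝓝[≠] x)
        (fun z => ((dist z x + b) ^ p - b ^ p) / p / dist z x) := hv.isBoundedUnder_le
    calc Filter.limsup (fun z => max ((φ z).toReal - (φ x).toReal) 0 / dist z x) (𝓝[≠] x)
        ≤ Filter.limsup (fun z => ((dist z x + b) ^ p - b ^ p) / p / dist z x) (𝓝[≠] x) :=
          limsup_le_limsup hev hcb hbd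
      _ = b ^ (p-1) := hv.limsup_eq
  · rw [not_neBot] at hne
    rw [hne]
    have : Filter.limsup (fun z : M => max ((φ z).toReal - (φ x).toReal) 0 / dist z x)
        (⊥ : Filter M) = 0 := by
      simp only [Filter.limsup, Filter.limsSup, Filter.map_bot]
      rw [show {a : ℝ | ∀ᶠ n in (⊥ : Filter ℝ), n ≤ a} = Set.univ by ext a; simp]
      exact Real.sInf_of_not_bddBelow (not_bddBelow_univ)
    rw [this]
    exact Real.rpow_nonneg hb0 _
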